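/- Let β > 0, L > 0, and let (A(t))_{t∈ℕ} be a sequence of n×n row-stochastic matrices each of which is β-rooted; let q_t, t ∈ ℕ, be stochastic vectors such that A(t)A(t−1)⋯A(s) → 𝟏 q_sᵀ entrywise as t → ∞ for each s. Let (α_t)_{t∈ℕ} be a nonnegative sequence with α_t → 0, and let (d(t))_{t∈ℕ} be vectors in ℝⁿ with ‖d(t)‖ ≤ L for all t. Define x(t+1) = A(t)x(t) − α_t d(t) for t ∈ ℕ, from an arbitrary x(0) ∈ ℝⁿ, and set y(t) = q_tᵀ x(t). Then ‖x(t) − 𝟏 y(t)‖ → 0 as t → ∞. -/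

import Mathlib

open Filter

/-- A matrix is row-stochastic if it has nonnegative entries and each row sums to 1. -/
def RowStochastic {n : ℕ} (A : Matrix (Fin n) (Fin n) ℝ) : Prop :=
  (∀ i j, 0 ≤ A i j) ∧ ∀ i, ∑ j, A i j = 1

/-- A vector is stochastic if its entries are nonnegative and sum to 1. -/
def StochasticVec {n : ℕ} (q : Fin n → ℝ) : Prop :=
  (∀ i, 0 ≤ q i) ∧ ∑ i, q i = 1

/-- A directed graph is rooted if some vertex has a directed path to every other vertex. -/
def Rooted {V : Type*} (E : V → V → Prop) : Prop :=
  ∃ r : V, ∀ v : V, Relation.ReflTransGen E r v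

/-- A row-stochastic matrix `A` is `β`-rooted if its diagonal entries are at least `β`
and the directed graph with an edge from `j` to `i` whenever `i ≠ j` and `A i j ≥ β`
is rooted. -/
def BetaRooted {n : ℕ} (β : ℝ) (A : Matrix (Fin n) (Fin n) ℝ) : Prop :=
  (∀ i, β ≤ A i i) ∧ Rooted (fun j i : Fin n => i ≠ j ∧ β ≤ A i j)

/-- The backward product `Φ(t,s) = A(t) A(t-1) ⋯ A(s)` (for `t ≥ s`). -/
def backProd {n : ℕ} (A : ℕ → Matrix (Fin n) (Fin n) ℝ) (s t : ℕ) :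
    Matrix (Fin n) (Fin n) ℝ :=
  (((List.range' s (t + 1 - s)).reverse).map A).prod

/-- The Euclidean norm of a vector in `ℝⁿ`. -/
noncomputable def euclNorm {n : ℕ} (v : Fin n → ℝ) : ℝ :=
  Real.sqrt (∑ i, (v i) ^ 2)

open Finset

section Aux
variable {n : ℕ} [NeZero n]

noncomputable def sprd (v : Fin n → ℝ) : ℝ :=
  univ.sup' univ_nonempty v - univ.inf' univ_nonempty v

lemma sprd_nonneg (v : Fin n → ℝ) : 0 ≤ sprd v := by
  obtain ⟨i, _⟩ := univ_nonempty (α := Fin n)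
  have h1 : univ.inf' univ_nonempty v ≤ v i := inf'_le _ (mem_univ i)
  have h2 : v i ≤ univ.sup' univ_nonempty v := le_sup' _ (mem_univ i)
  simp only [sprd]; linarith

lemma sub_le_sprd (v : Fin n → ℝ) (i j : Fin n) : v i - v j ≤ sprd v := by
  have h1 : univ.inf' univ_nonempty v ≤ v j := inf'_le _ (mem_univ j)
  have h2 : v i ≤ univ.sup' univ_nonempty v := le_sup' _ (mem_univ i)
  simp only [sprd]; linarith

lemma mulVec_mem_Icc {A : Matrix (Fin n) (Fin n) ℝ} (hA : RowStochastic A)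
    (v : Fin n → ℝ) (i : Fin n) :
    univ.inf' univ_nonempty v ≤ A.mulVec v i ∧ A.mulVec v i ≤ univ.sup' univ_nonempty v := by
  have hv : A.mulVec v i = ∑ j, A i j * v j := by
    simp [Matrix.mulVec, dotProduct]
  constructor
  · rw [hv]
    calc univ.inf' univ_nonempty v = ∑ j, A i j * univ.inf' univ_nonempty v := by
          rw [← Finset.sum_mul, hA.2 i, one_mul]
      _ ≤ ∑ j, A i j * v j :=
          Finset.sum_le_sum fun j _ =>
            mul_le_mul_of_nonneg_left (inf'_le _ (mem_univ j)) (hA.1 i j)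
  · rw [hv]
    calc ∑ j, A i j * v j ≤ ∑ j, A i j * univ.sup' univ_nonempty v :=
          Finset.sum_le_sum fun j _ =>
            mul_le_mul_of_nonneg_left (le_sup' _ (mem_univ j)) (hA.1 i j)
      _ = univ.sup' univ_nonempty v := by rw [← Finset.sum_mul, hA.2 i, one_mul]

lemma sprd_mulVec_le {A : Matrix (Fin n) (Fin n) ℝ} (hA : RowStochastic A)
    (v : Fin n → ℝ) : sprd (A.mulVec v) ≤ sprd v := by
  have h1 : univ.sup' univ_nonempty (A.mulVec v) ≤ univ.sup' univ_nonempty v :=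
    sup'_le _ _ fun i _ => (mulVec_mem_Icc hA v i).2
  have h2 : univ.inf' univ_nonempty v ≤ univ.inf' univ_nonempty (A.mulVec v) :=
    le_inf' _ _ fun i _ => (mulVec_mem_Icc hA v i).1
  simp only [sprd]; linarith

/-- Contraction: if some column of a stochastic matrix is bounded below by `γ`. -/
lemma sprd_mulVec_contract {A : Matrix (Fin n) (Fin n) ℝ} (hA : RowStochastic A)
    {γ : ℝ} (hγ : 0 ≤ γ) {r : Fin n} (hcol : ∀ i, γ ≤ A i r)
    (v : Fin n → ℝ) : sprd (A.mulVec v) ≤ (1 - γ) * sprd v := by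
  set M := univ.sup' univ_nonempty v with hM
  set m := univ.inf' univ_nonempty v with hm
  have hub : ∀ i, A.mulVec v i ≤ M - γ * (M - v r) := by
    intro i
    have hv : A.mulVec v i = ∑ j, A i j * v j := by
      simp [Matrix.mulVec, dotProduct]
    have hsplit : ∑ j, A i j * v j = A i r * v r + ∑ j ∈ univ.erase r, A i j * v j := by
      rw [← Finset.sum_erase_add univ _ (mem_univ r)]; ring
    have h2 : ∑ j ∈ univ.erase r, A i j = 1 - A i r := by
      have := Finset.sum_erase_add univ (A i) (mem_univ r)
      rw [hA.2 i] at this; linarith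
    have hrest : ∑ j ∈ univ.erase r, A i j * v j ≤ (1 - A i r) * M := by
      rw [← h2, Finset.sum_mul]
      exact Finset.sum_le_sum fun j _ =>
        mul_le_mul_of_nonneg_left (le_sup' _ (mem_univ j)) (hA.1 i j)
    have hMvr : γ * (M - v r) ≤ A i r * (M - v r) := by
      apply mul_le_mul_of_nonneg_right (hcol i)
      have : v r ≤ M := le_sup' _ (mem_univ r)
      linarith
    rw [hv, hsplit]; nlinarith [hcol i]
  have hlb : ∀ i, m + γ * (v r - m) ≤ A.mulVec v i := by
    intro i
    have hv : A.mulVec v i = ∑ j, A i j * v j := by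
      simp [Matrix.mulVec, dotProduct]
    have hsplit : ∑ j, A i j * v j = A i r * v r + ∑ j ∈ univ.erase r, A i j * v j := by
      rw [← Finset.sum_erase_add univ _ (mem_univ r)]; ring
    have h2 : ∑ j ∈ univ.erase r, A i j = 1 - A i r := by
      have := Finset.sum_erase_add univ (A i) (mem_univ r)
      rw [hA.2 i] at this; linarith
    have hrest : (1 - A i r) * m ≤ ∑ j ∈ univ.erase r, A i j * v j := by
      rw [← h2, Finset.sum_mul]
      exact Finset.sum_le_sum fun j _ =>
        mul_le_mul_of_nonneg_left (inf'_le _ (mem_univ j)) (hA.1 i j)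
    have hMvr : γ * (v r - m) ≤ A i r * (v r - m) := by
      apply mul_le_mul_of_nonneg_right (hcol i)
      have : m ≤ v r := inf'_le _ (mem_univ r)
      linarith
    rw [hv, hsplit]; nlinarith [hcol i]
  have h1 : univ.sup' univ_nonempty (A.mulVec v) ≤ M - γ * (M - v r) :=
    sup'_le _ _ fun i _ => hub i
  have h2 : m + γ * (v r - m) ≤ univ.inf' univ_nonempty (A.mulVec v) :=
    le_inf' _ _ fun i _ => hlb i
  simp only [sprd]
  have : univ.sup' univ_nonempty v = M := rfl
  have : univ.inf' univ_nonempty v = m := rfl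
  nlinarith []

lemma sprd_le_of_close {u w : Fin n → ℝ} {c : ℝ}
    (h : ∀ i, |u i - w i| ≤ c) : sprd u ≤ sprd w + 2 * c := by
  have h1 : univ.sup' univ_nonempty u ≤ univ.sup' univ_nonempty w + c := by
    apply sup'_le
    intro i _
    have := abs_le.1 (h i)
    have hw : w i ≤ univ.sup' univ_nonempty w := le_sup' _ (mem_univ i)
    linarith [this.2]
  have h2 : univ.inf' univ_nonempty w - c ≤ univ.inf' univ_nonempty u := by
    apply le_inf'
    intro i _
    have := abs_le.1 (h i)
    have hw : univ.inf' univ_nonempty w ≤ w i := inf'_le _ (mem_univ i)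
    linarith [this.1]
  simp only [sprd]; linarith

end Aux

/-! ### Products of stochastic matrices -/

lemma rowStochastic_one {n : ℕ} : RowStochastic (1 : Matrix (Fin n) (Fin n) ℝ) := by
  constructor
  · intro i j
    by_cases h : i = j <;> simp [Matrix.one_apply, h]
  · intro i
    simp [Matrix.one_apply]

lemma rowStochastic_mul {n : ℕ} {A B : Matrix (Fin n) (Fin n) ℝ}
    (hA : RowStochastic A) (hB : RowStochastic B) : RowStochastic (A * B) := by
  constructor
  · intro i j
    rw [Matrix.mul_apply]
    exact Finset.sum_nonneg fun k _ => mul_nonneg (hA.1 i k) (hB.1 k j)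
  · intro i
    simp only [Matrix.mul_apply]
    rw [Finset.sum_comm]
    calc ∑ k, ∑ j, A i k * B k j = ∑ k, A i k * ∑ j, B k j := by
          simp [Finset.mul_sum]
      _ = 1 := by simp only [hB.2]; simp [hA.2 i]

/-- Partial forward-window products: `Wprod A t m = A (t+m-1) ⋯ A (t+1) A t`. -/
def Wprod {n : ℕ} (A : ℕ → Matrix (Fin n) (Fin n) ℝ) (t : ℕ) : ℕ → Matrix (Fin n) (Fin n) ℝ
  | 0 => 1
  | (m+1) => A (t+m) * Wprod A t m

lemma rowStochastic_Wprod {n : ℕ} {A : ℕ → Matrix (Fin n) (Fin n) ℝ}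
    (hA : ∀ t, RowStochastic (A t)) (t : ℕ) : ∀ m, RowStochastic (Wprod A t m)
  | 0 => rowStochastic_one
  | (m+1) => rowStochastic_mul (hA (t+m)) (rowStochastic_Wprod hA t m)

/-! ### Crossing and counting lemmas -/

lemma exists_crossing {V : Type*} {E : V → V → Prop} {R : Finset V} {r v : V}
    (h : Relation.ReflTransGen E r v) (hr : r ∈ R) (hv : v ∉ R) :
    ∃ j i, j ∈ R ∧ i ∉ R ∧ E j i := by
  induction h with
  | refl => exact absurd hr hv
  | @tail b c hab hbc ih =>
    by_cases hb : b ∈ R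
    · exact ⟨b, c, hb, hv, hbc⟩
    · exact ih hb

lemma count_increase (f : ℕ → ℕ) (hmono : ∀ m, f m ≤ f (m+1)) :
    ∀ (T : ℕ) (F : Finset ℕ), F ⊆ range T → (∀ m ∈ F, f m < f (m+1)) →
      f 0 + F.card ≤ f T := by
  intro T
  induction T with
  | zero =>
    intro F hF _
    have : F = ∅ := subset_empty.mp (by simpa using hF)
    simp [this]
  | succ T ih =>
    intro F hF hgrow
    have hF' : F.erase T ⊆ range T := by
      intro m hm
      have h1 := hF (erase_subset _ _ hm)
      rw [mem_range] at h1 ⊢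
      rcases Nat.lt_succ_iff_lt_or_eq.mp h1 with h | h
      · exact h
      · exact absurd h (ne_of_mem_erase hm)
    have hmain := ih (F.erase T) hF' (fun m hm => hgrow m (erase_subset _ _ hm))
    by_cases hT : T ∈ F
    · have hc : F.card = (F.erase T).card + 1 := (Finset.card_erase_add_one hT).symm
      have hstep := hgrow T hT
      calc f 0 + F.card = f 0 + (F.erase T).card + 1 := by
            rw [hc, Nat.add_assoc]
        _ ≤ f T + 1 := Nat.add_le_add_right hmain 1
        _ ≤ f (T+1) := Nat.succ_le_of_lt hstep
    · rw [erase_eq_of_notMem hT] at hmain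
      exact le_trans hmain (hmono T)

lemma Wprod_entry_nonneg {n : ℕ} {A : ℕ → Matrix (Fin n) (Fin n) ℝ}
    (hA : ∀ t, RowStochastic (A t)) (t m : ℕ) (i j : Fin n) :
    0 ≤ Wprod A t m i j := (rowStochastic_Wprod hA t m).1 i j

lemma Wprod_pos_col {n : ℕ} [NeZero n] {β : ℝ} (hβ : 0 < β)
    {A : ℕ → Matrix (Fin n) (Fin n) ℝ}
    (hA : ∀ t, RowStochastic (A t)) (hroot : ∀ t, BetaRooted β (A t)) (t : ℕ) :
    ∃ r : Fin n, ∀ i, β ^ (n*n) ≤ Wprod A t (n*n) i r := by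
  classical
  have hn : 0 < n := Nat.pos_of_ne_zero (NeZero.ne n)
  set rt : ℕ → Fin n := fun s => (hroot s).2.choose with hrt_def
  have hrt : ∀ s v, Relation.ReflTransGen
      (fun j i : Fin n => i ≠ j ∧ β ≤ A s i j) (rt s) v :=
    fun s => (hroot s).2.choose_spec
  -- pigeonhole
  obtain ⟨r, -, hFcard⟩ :=
    Finset.exists_le_card_fiber_of_mul_le_card_of_maps_to
      (s := range (n*n)) (t := (univ : Finset (Fin n))) (f := fun k => rt (t+k))
      (n := n - 1)
      (fun a _ => mem_univ _) univ_nonempty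
      (by simp [Nat.mul_le_mul_left n (Nat.sub_le n 1)])
  set F : Finset ℕ := (range (n*n)).filter (fun k => rt (t+k) = r) with hF_def
  set R : ℕ → Finset (Fin n) :=
    fun m => univ.filter (fun i => β ^ m ≤ Wprod A t m i r) with hR_def
  have hmemR : ∀ m i, i ∈ R m ↔ β ^ m ≤ Wprod A t m i r := by
    intro m i; simp [hR_def]
  have hr0 : r ∈ R 0 := by
    rw [hmemR]
    simp [Wprod, Matrix.one_apply]
  have hmono : ∀ m, R m ⊆ R (m+1) := by
    intro m i hi
    rw [hmemR] at hi ⊢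
    have hterm : β ^ (m+1) ≤ A (t+m) i i * Wprod A t m i r := by
      rw [pow_succ, mul_comm]
      exact mul_le_mul ((hroot (t+m)).1 i) hi (pow_nonneg hβ.le m)
        ((hA (t+m)).1 i i)
    calc β ^ (m+1) ≤ A (t+m) i i * Wprod A t m i r := hterm
      _ ≤ ∑ k, A (t+m) i k * Wprod A t m k r :=
        Finset.single_le_sum
          (fun k _ => mul_nonneg ((hA (t+m)).1 i k) (Wprod_entry_nonneg hA t m k r))
          (mem_univ i)
      _ = Wprod A t (m+1) i r := by
        show _ = (A (t+m) * Wprod A t m) i r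
        rw [Matrix.mul_apply]
  have hchain : ∀ m m', m ≤ m' → R m ⊆ R m' := by
    intro m m' h
    induction h with
    | refl => exact Finset.Subset.refl _
    | step h ih => exact Finset.Subset.trans ih (hmono _)
  have hRr : ∀ m, r ∈ R m := fun m => hchain 0 m (Nat.zero_le m) hr0
  have hgrow : ∀ m, rt (t+m) = r → R m ≠ univ → (R m).card < (R (m+1)).card := by
    intro m hm hne
    obtain ⟨v, hv⟩ : ∃ v, v ∉ R m := by
      by_contra h
      push_neg at h
      exact hne (Finset.eq_univ_iff_forall.mpr h)
    have hpath : Relation.ReflTransGen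
        (fun j i : Fin n => i ≠ j ∧ β ≤ A (t+m) i j) r v := by
      rw [← hm]; exact hrt (t+m) v
    obtain ⟨j, i, hj, hi, hE⟩ := exists_crossing hpath (hRr m) hv
    have hiR : i ∈ R (m+1) := by
      rw [hmemR]
      rw [hmemR] at hj
      calc β ^ (m+1) ≤ A (t+m) i j * Wprod A t m j r := by
            rw [pow_succ, mul_comm]
            exact mul_le_mul hE.2 hj (pow_nonneg hβ.le m) ((hA (t+m)).1 i j)
        _ ≤ ∑ k, A (t+m) i k * Wprod A t m k r :=
          Finset.single_le_sum
            (fun k _ => mul_nonneg ((hA (t+m)).1 i k) (Wprod_entry_nonneg hA t m k r))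
            (mem_univ j)
        _ = Wprod A t (m+1) i r := by
          show _ = (A (t+m) * Wprod A t m) i r
          rw [Matrix.mul_apply]
    exact Finset.card_lt_card ⟨hmono m, fun hsub => hi (hsub hiR)⟩
  have hfinal : R (n*n) = univ := by
    by_contra hne
    have hgrow' : ∀ m ∈ F, (R m).card < (R (m+1)).card := by
      intro m hm
      rw [hF_def, mem_filter] at hm
      apply hgrow m hm.2
      intro hEq
      apply hne
      have := hchain m (n*n) (le_of_lt (mem_range.mp hm.1))
      rw [hEq] at this
      exact Finset.univ_subset_iff.mp this
    have hcount := count_increase (fun m => (R m).card)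
      (fun m => Finset.card_le_card (hmono m)) (n*n) F (filter_subset _ _) hgrow'
    have hlt : (R (n*n)).card < n := by
      have := (Finset.card_lt_iff_ne_univ (R (n*n))).mpr hne
      simpa using this
    have h0 : 1 ≤ (R 0).card := Finset.card_pos.mpr ⟨r, hr0⟩
    have hcount' : (R 0).card + F.card ≤ (R (n*n)).card := hcount
    omega
  refine ⟨r, fun i => ?_⟩
  have : i ∈ R (n*n) := hfinal ▸ mem_univ i
  exact (hmemR _ _).mp this

lemma mulVec_close {n : ℕ} {A : Matrix (Fin n) (Fin n) ℝ} (hA : RowStochastic A)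
    {u w : Fin n → ℝ} {c : ℝ} (hc : 0 ≤ c) (h : ∀ j, |u j - w j| ≤ c) (i : Fin n) :
    |A.mulVec u i - A.mulVec w i| ≤ c := by
  have hdiff : A.mulVec u i - A.mulVec w i = ∑ j, A i j * (u j - w j) := by
    simp only [Matrix.mulVec, dotProduct, ← Finset.sum_sub_distrib, mul_sub]
  rw [hdiff]
  calc |∑ j, A i j * (u j - w j)| ≤ ∑ j, |A i j * (u j - w j)| :=
        Finset.abs_sum_le_sum_abs _ _
    _ ≤ ∑ j, A i j * c := by
        apply Finset.sum_le_sum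
        intro j _
        rw [abs_mul, abs_of_nonneg (hA.1 i j)]
        exact mul_le_mul_of_nonneg_left (h j) (hA.1 i j)
    _ = c := by rw [← Finset.sum_mul, hA.2 i, one_mul]

lemma abs_le_euclNorm {n : ℕ} (v : Fin n → ℝ) (i : Fin n) : |v i| ≤ euclNorm v := by
  rw [euclNorm, ← Real.sqrt_sq_eq_abs]
  exact Real.sqrt_le_sqrt
    (Finset.single_le_sum (fun j _ => sq_nonneg (v j)) (mem_univ i))

lemma euclNorm_le {n : ℕ} {v : Fin n → ℝ} {c : ℝ} (hc : 0 ≤ c)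
    (h : ∀ i, |v i| ≤ c) : euclNorm v ≤ Real.sqrt n * c := by
  rw [euclNorm]
  calc Real.sqrt (∑ i, (v i) ^ 2) ≤ Real.sqrt (∑ _i : Fin n, c ^ 2) := by
        apply Real.sqrt_le_sqrt
        apply Finset.sum_le_sum
        intro i _
        calc (v i) ^ 2 = |v i| ^ 2 := (sq_abs _).symm
          _ ≤ c ^ 2 := pow_le_pow_left₀ (abs_nonneg _) (h i) 2
    _ = Real.sqrt ((n : ℝ) * c ^ 2) := by
        rw [Finset.sum_const, Finset.card_univ, Fintype.card_fin, nsmul_eq_mul]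
    _ = Real.sqrt n * c := by
        rw [Real.sqrt_mul (Nat.cast_nonneg n), Real.sqrt_sq hc]

/-- If the matrices are `β`-rooted and row-stochastic, the gradient perturbations are
bounded by `L`, and the step-sizes go to zero, then `‖x(t) − 𝟏 y(t)‖ → 0`, where
`y(t) = qₜᵀ x(t)`. -/
theorem stmt4 {n : ℕ} (β L : ℝ) (hβ : 0 < β) (hL : 0 < L)
    (A : ℕ → Matrix (Fin n) (Fin n) ℝ)
    (hstoch : ∀ t, RowStochastic (A t)) (hrooted : ∀ t, BetaRooted β (A t))
    (q : ℕ → Fin n → ℝ) (hq : ∀ s, StochasticVec (q s))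
    (hconv : ∀ s i j, Tendsto (fun t => backProd A s t i j) atTop (nhds (q s j)))
    (α : ℕ → ℝ) (hα0 : ∀ t, 0 ≤ α t) (hαlim : Tendsto α atTop (nhds 0))
    (d : ℕ → Fin n → ℝ) (hd : ∀ t, euclNorm (d t) ≤ L)
    (x : ℕ → Fin n → ℝ)
    (hdyn : ∀ t, x (t + 1) = (A t).mulVec (x t) - α t • d t) :
    Tendsto (fun t => euclNorm (fun i => x t i - ∑ j, q t j * x t j)) atTop (nhds 0) := by
  classical
    rcases Nat.eq_zero_or_pos n with h0 | hn
  · subst h0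
    have hz : (fun t => euclNorm (fun i : Fin 0 => x t i - ∑ j, q t j * x t j))
        = fun _ => (0 : ℝ) := by
      funext t; simp [euclNorm]
    rw [hz]
    exact tendsto_const_nhds
  haveI : NeZero n := ⟨hn.ne'⟩
  set T := n * n with hTdef
  have hT1 : 0 < T := Nat.mul_pos hn hn
  have hβ1 : β ≤ 1 := by
    have i0 : Fin n := ⟨0, hn⟩
    have h1 := (hrooted 0).1 i0
    have h2 : A 0 i0 i0 ≤ ∑ j, A 0 i0 j :=
      Finset.single_le_sum (fun j _ => (hstoch 0).1 i0 j) (mem_univ i0)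
    rw [(hstoch 0).2 i0] at h2
    linarith
  set γ := β ^ T with hγdef
  have hγ0 : 0 < γ := pow_pos hβ T
  have hγ1 : γ ≤ 1 := pow_le_one₀ hβ.le hβ1
  set S : ℕ → ℝ := fun t => sprd (x t) with hSdef
  have hS0 : ∀ t, 0 ≤ S t := fun t => sprd_nonneg _
  have hdabs : ∀ t i, |d t i| ≤ L := fun t i => le_trans (abs_le_euclNorm _ _) (hd t)
  -- the trajectory stays close to the unperturbed window product
  have hxclose : ∀ (t : ℕ) (ε : ℝ), 0 ≤ ε → (∀ u, t ≤ u → α u ≤ ε) →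
      ∀ (m : ℕ) (i : Fin n),
        |x (t+m) i - (Wprod A t m).mulVec (x t) i| ≤ L * ε * m := by
    intro t ε hε hα m
    induction m with
    | zero =>
      intro i
      simp [Wprod, Matrix.one_mulVec]
    | succ m ih =>
      intro i
      have hW : (Wprod A t (m+1)).mulVec (x t)
          = (A (t+m)).mulVec ((Wprod A t m).mulVec (x t)) := by
        show (A (t+m) * Wprod A t m).mulVec (x t) = _
        rw [← Matrix.mulVec_mulVec]
      have hx1 : x (t+(m+1)) i
          = (A (t+m)).mulVec (x (t+m)) i - α (t+m) * d (t+m) i := by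
        have h := hdyn (t+m)
        have : t+(m+1) = (t+m)+1 := by ring
        rw [this, h]
        simp
      have habs : |(A (t+m)).mulVec (x (t+m)) i
          - (A (t+m)).mulVec ((Wprod A t m).mulVec (x t)) i| ≤ L * ε * m :=
        mulVec_close (hstoch (t+m)) (by positivity) ih i
      have hα' : α (t+m) ≤ ε := hα (t+m) (Nat.le_add_right t m)
      have hdb : |α (t+m) * d (t+m) i| ≤ ε * L := by
        rw [abs_mul, abs_of_nonneg (hα0 (t+m))]
        exact mul_le_mul hα' (hdabs (t+m) i) (abs_nonneg _) hε
      rw [hx1, hW]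
      calc |(A (t+m)).mulVec (x (t+m)) i - α (t+m) * d (t+m) i
            - (A (t+m)).mulVec ((Wprod A t m).mulVec (x t)) i|
          = |((A (t+m)).mulVec (x (t+m)) i
              - (A (t+m)).mulVec ((Wprod A t m).mulVec (x t)) i)
              + (-(α (t+m) * d (t+m) i))| := by ring_nf
        _ ≤ |(A (t+m)).mulVec (x (t+m)) i
              - (A (t+m)).mulVec ((Wprod A t m).mulVec (x t)) i|
              + |(-(α (t+m) * d (t+m) i))| := abs_add_le _ _
        _ ≤ L * ε * m + ε * L := by rw [abs_neg]; exact add_le_add habs hdb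
        _ = L * ε * (m+1 : ℕ) := by push_cast; ring
  -- window contraction
  have hwin : ∀ (t : ℕ) (ε : ℝ), 0 ≤ ε → (∀ u, t ≤ u → α u ≤ ε) →
      S (t+T) ≤ (1-γ) * S t + 2 * (L * ε * T) := by
    intro t ε hε hα
    obtain ⟨r, hcol⟩ := Wprod_pos_col hβ hstoch hrooted t
    have h1 : sprd (x (t+T)) ≤ sprd ((Wprod A t T).mulVec (x t)) + 2 * (L * ε * T) :=
      sprd_le_of_close (fun i => hxclose t ε hε hα T i)
    have h2 : sprd ((Wprod A t T).mulVec (x t)) ≤ (1-γ) * sprd (x t) :=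
      sprd_mulVec_contract (rowStochastic_Wprod hstoch t T) hγ0.le hcol (x t)
    simp only [hSdef]
    linarith
  -- per-step bound
  have hstep : ∀ (t : ℕ) (ε : ℝ), 0 ≤ ε → α t ≤ ε → S (t+1) ≤ S t + 2 * (L * ε) := by
    intro t ε hε hαt
    have h1 : ∀ i, |x (t+1) i - (A t).mulVec (x t) i| ≤ L * ε := by
      intro i
      rw [hdyn t]
      simp only [Pi.sub_apply, Pi.smul_apply, smul_eq_mul]
      have : (A t).mulVec (x t) i - α t * d t i - (A t).mulVec (x t) i
          = -(α t * d t i) := by ring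
      rw [this, abs_neg, abs_mul, abs_of_nonneg (hα0 t)]
      calc α t * |d t i| ≤ ε * L :=
            mul_le_mul hαt (hdabs t i) (abs_nonneg _) hε
        _ = L * ε := by ring
    have h2 := sprd_le_of_close h1
    have h3 := sprd_mulVec_le (hstoch t) (x t)
    simp only [hSdef]
    linarith
  have hsteps : ∀ (N t : ℕ) (ε : ℝ), 0 ≤ ε → (∀ u, N ≤ u → α u ≤ ε) → N ≤ t →
      ∀ j, S (t+j) ≤ S t + 2 * (L * ε) * j := by
    intro N t ε hε hα hNt j
    induction j with
    | zero => simp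
    | succ j ih =>
      have h1 : S ((t+j)+1) ≤ S (t+j) + 2 * (L * ε) :=
        hstep (t+j) ε hε (hα (t+j) (le_trans hNt (Nat.le_add_right t j)))
      have : t+(j+1) = (t+j)+1 := by ring
      rw [this]
      push_cast
      push_cast at ih
      linarith
  -- geometric decay along the subsequence
  have hgeo : ∀ (N : ℕ) (ε : ℝ), 0 ≤ ε → (∀ u, N ≤ u → α u ≤ ε) →
      ∀ k, S (N + k*T) ≤ (1-γ)^k * S N + (2 * (L * ε * T))/γ := by
    intro N ε hε hα k
    induction k with
    | zero =>
      simp only [Nat.zero_mul, Nat.add_zero, pow_zero, one_mul]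
      have : 0 ≤ (2 * (L * ε * T))/γ := by positivity
      linarith
    | succ k ih =>
      have hW := hwin (N + k*T) ε hε (fun u hu => hα u (le_trans (Nat.le_add_right N _) hu))
      have hkey : (1-γ) * ((2 * (L * ε * T))/γ) + 2 * (L * ε * T)
          = (2 * (L * ε * T))/γ := by
        field_simp
        ring
      have hmul : (1-γ) * S (N + k*T)
          ≤ (1-γ) * ((1-γ)^k * S N + (2 * (L * ε * T))/γ) :=
        mul_le_mul_of_nonneg_left ih (by linarith)
      have hidx : N + (k+1)*T = (N + k*T) + T := by ring
      rw [hidx]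
      calc S ((N + k*T) + T) ≤ (1-γ) * S (N + k*T) + 2 * (L * ε * T) := hW
        _ ≤ (1-γ) * ((1-γ)^k * S N + (2 * (L * ε * T))/γ) + 2 * (L * ε * T) := by
            linarith
        _ = (1-γ)^(k+1) * S N + ((1-γ) * ((2 * (L * ε * T))/γ) + 2 * (L * ε * T)) := by
            ring
        _ = (1-γ)^(k+1) * S N + (2 * (L * ε * T))/γ := by rw [hkey]
  clear_value T
  -- S tends to zero
  have hStend : Tendsto S atTop (nhds 0) := by
    rw [Metric.tendsto_atTop]
    intro ε₀ hε₀
    set D : ℝ := 2 * L * T / γ + 2 * L * T + 1 with hDdef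
    have hD0 : 0 < D := by positivity
    set ε := ε₀ / (2*D) with hεdef
    have hε0 : 0 < ε := by positivity
    obtain ⟨N, hN⟩ := Metric.tendsto_atTop.mp hαlim ε hε0
    have hN' : ∀ u, N ≤ u → α u ≤ ε := by
      intro u hu
      have := hN u hu
      rw [Real.dist_eq, sub_zero, abs_of_nonneg (hα0 u)] at this
      linarith
    have hpow : Tendsto (fun k : ℕ => (1-γ)^k * S N) atTop (nhds 0) := by
      have h := (tendsto_pow_atTop_nhds_zero_of_lt_one
        (by linarith : (0:ℝ) ≤ 1-γ) (by linarith : 1-γ < 1)).mul_const (S N)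
      simpa using h
    obtain ⟨K, hK⟩ := Metric.tendsto_atTop.mp hpow (ε₀/2) (by positivity)
    refine ⟨N + K*T + T, fun t ht => ?_⟩
    have hNt : N ≤ t := by omega
    set k := (t - N) / T with hkdef
    set j := (t - N) % T with hjdef
    have hmod : k * T + j = t - N := by
      rw [hkdef, hjdef, Nat.mul_comm]
      exact Nat.div_add_mod (t - N) T
    have hdecomp : t = (N + k*T) + j := by omega
    have hjT : j < T := Nat.mod_lt _ hT1
    have hkK : K ≤ k := by
      have h2 : N + (K*T + T) ≤ t := by rw [← Nat.add_assoc]; exact ht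
      have h3 : K*T + T ≤ t - N := Nat.le_sub_of_add_le (by rwa [Nat.add_comm] at h2)
      rw [hkdef, Nat.le_div_iff_mul_le hT1]
      exact le_trans (Nat.le_add_right _ _) h3
    have hb1 : S ((N + k*T) + j) ≤ S (N + k*T) + 2 * (L * ε) * j :=
      hsteps N (N + k*T) ε hε0.le hN' (Nat.le_add_right N _) j
    have hb2 : S (N + k*T) ≤ (1-γ)^k * S N + (2 * (L * ε * T))/γ :=
      hgeo N ε hε0.le hN' k
    have hb3 : (1-γ)^k * S N < ε₀/2 := by
      have := hK k hkK
      rw [Real.dist_eq, sub_zero] at this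
      have hnn : 0 ≤ (1-γ)^k * S N :=
        mul_nonneg (pow_nonneg (by linarith) k) (hS0 N)
      rw [abs_of_nonneg hnn] at this
      exact this
    have hjle : (j:ℝ) ≤ (T:ℝ) := by
      exact_mod_cast hjT.le
    have hb4 : 2 * (L * ε) * (j:ℝ) ≤ 2 * (L * ε * T) := by
      have : 2 * (L * ε) * (j:ℝ) ≤ 2 * (L * ε) * (T:ℝ) :=
        mul_le_mul_of_nonneg_left hjle (by positivity)
      linarith
    have hb5 : (2 * (L * ε * T))/γ + 2 * (L * ε * T) ≤ ε₀/2 := by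
      have hεD : ε * D = ε₀/2 := by
        rw [hεdef]
        field_simp
      have hexp : (2 * (L * ε * T))/γ + 2 * (L * ε * T) = ε * (2 * L * T / γ + 2 * L * T) := by
        field_simp
      rw [hexp]
      have : ε * (2 * L * T / γ + 2 * L * T) ≤ ε * D := by
        apply mul_le_mul_of_nonneg_left _ hε0.le
        rw [hDdef]
        linarith
      linarith
    rw [Real.dist_eq, sub_zero, abs_of_nonneg (hS0 t)]
    calc S t = S ((N + k*T) + j) := by rw [← hdecomp]
      _ ≤ S (N + k*T) + 2 * (L * ε) * j := hb1
      _ ≤ (1-γ)^k * S N + (2 * (L * ε * T))/γ + 2 * (L * ε * T) := by linarith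
      _ < ε₀/2 + ε₀/2 := by linarith
      _ = ε₀ := by ring
  -- conclude via the spread
  have hbound : ∀ t, euclNorm (fun i => x t i - ∑ j, q t j * x t j)
      ≤ Real.sqrt n * S t := by
    intro t
    apply euclNorm_le (hS0 t)
    intro i
    set y := ∑ j, q t j * x t j with hy
    have hysup : y ≤ univ.sup' univ_nonempty (x t) := by
      calc y ≤ ∑ j, q t j * univ.sup' univ_nonempty (x t) :=
            Finset.sum_le_sum fun j _ =>
              mul_le_mul_of_nonneg_left (le_sup' _ (mem_univ j)) ((hq t).1 j)
        _ = univ.sup' univ_nonempty (x t) := by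
            rw [← Finset.sum_mul, (hq t).2, one_mul]
    have hyinf : univ.inf' univ_nonempty (x t) ≤ y := by
      calc univ.inf' univ_nonempty (x t)
            = ∑ j, q t j * univ.inf' univ_nonempty (x t) := by
            rw [← Finset.sum_mul, (hq t).2, one_mul]
        _ ≤ y := Finset.sum_le_sum fun j _ =>
            mul_le_mul_of_nonneg_left (inf'_le _ (mem_univ j)) ((hq t).1 j)
    have h1 : x t i ≤ univ.sup' univ_nonempty (x t) := le_sup' _ (mem_univ i)
    have h2 : univ.inf' univ_nonempty (x t) ≤ x t i := inf'_le _ (mem_univ i)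
    have hSt : S t = univ.sup' univ_nonempty (x t) - univ.inf' univ_nonempty (x t) := rfl
    rw [abs_le]
    constructor
    · linarith [hSt]
    · linarith [hSt]
  have hsqS : Tendsto (fun t => Real.sqrt n * S t) atTop (nhds 0) := by
    have := hStend.const_mul (Real.sqrt n)
    simpa using this
  exact squeeze_zero (fun t => Real.sqrt_nonneg _) hbound hsqS
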